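/- Let A be a Deligne-finite k-linear abelian category over an algebraically closed field k, with a fixed ordering S_1,…,S_n of its simple objects, and suppose [Δ_j : S_j] = 1 for each j = 1,…,n. Then for each i the length of the projective cover P_i satisfies length(P_i) ≤ Σ_{j=1}^{n} [∇_j : S_i] · length(Δ_j), and equality holds for all i if and only if [P_i] = Σ_{j=i}^{n} [∇_j : S_i] · [Δ_j] in K(A) for all i; in the case of equality each P_i admits a filtration whose factors are direct sums of the standard objects Δ_i,…,Δ_n. -/

import Mathlib

open CategoryTheory CategoryTheory.Limits

universe v u

namespace HWPaper

variable {C : Type u} [Category.{v} C]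

/-- `p : P ⟶ X` exhibits `P` as a projective cover of `X`:
`P` is projective, `p` is epi, and `p` is a superfluous epimorphism. -/
def IsProjCover (P X : C) (p : P ⟶ X) : Prop :=
  Projective P ∧ Epi p ∧ ∀ ⦃Y : C⦄ (f : Y ⟶ P), Epi (f ≫ p) → Epi f

/-- `ι : X ⟶ I` exhibits `I` as an injective hull of `X`. -/
def IsInjHull (X I : C) (ι : X ⟶ I) : Prop :=
  Injective I ∧ Mono ι ∧ ∀ ⦃Y : C⦄ (f : I ⟶ Y), Mono (ι ≫ f) → Mono f

/-- `q : P ⟶ D` exhibits `D` as the maximal quotient of `P` lying in the class `mem`: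
every quotient of `P` lying in `mem` factors through `q`. -/
def IsMaxQuotientIn (mem : C → Prop) (P D : C) (q : P ⟶ D) : Prop :=
  Epi q ∧ mem D ∧ ∀ ⦃Q : C⦄ (e : P ⟶ Q), Epi e → mem Q → ∃ r : D ⟶ Q, q ≫ r = e

/-- `m : N ⟶ I` exhibits `N` as the maximal subobject of `I` lying in the class `mem`. -/
def IsMaxSubobjectIn (mem : C → Prop) (I N : C) (m : N ⟶ I) : Prop :=
  Mono m ∧ mem N ∧ ∀ ⦃M : C⦄ (s : M ⟶ I), Mono s → mem M → ∃ r : M ⟶ N, r ≫ m = s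

/-- The extension closure of a class of objects in an abelian category. -/
inductive ExtClosure [Abelian C] (P : C → Prop) : C → Prop
  | of (X : C) : P X → ExtClosure P X
  | zero (X : C) : IsZero X → ExtClosure P X
  | ext (S : ShortComplex C) : S.ShortExact → ExtClosure P S.X₁ → ExtClosure P S.X₃ →
      ExtClosure P S.X₂

variable (C) in
/-- The subgroup of relations coming from short exact sequences. -/
def K0Relations [Abelian C] : AddSubgroup (FreeAbelianGroup C) :=
  AddSubgroup.closure {x | ∃ S : ShortComplex C, S.ShortExact ∧
    x = FreeAbelianGroup.of S.X₂ - FreeAbelianGroup.of S.X₁ - FreeAbelianGroup.of S.X₃}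

variable (C) in
/-- The Grothendieck group of an abelian category. -/
def K0 [Abelian C] : Type u := FreeAbelianGroup C ⧸ K0Relations C

noncomputable instance [Abelian C] : AddCommGroup (K0 C) :=
  QuotientAddGroup.Quotient.addCommGroup _

/-- The class of an object in the Grothendieck group. -/
def K0.cls [Abelian C] (X : C) : K0 C := QuotientAddGroup.mk (FreeAbelianGroup.of X)

/-- The data of a Deligne-finite `k`-linear abelian category with an ordering
`S 0, …, S (n-1)` of its simple objects, together with projective covers, injective hulls,
standard and costandard objects, and the Jordan–Hölder multiplicity function. -/
structure DeligneData (k : Type v) [Field k] [IsAlgClosed k]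
    (C : Type u) [Category.{v} C] [Abelian C] [Linear k C] [EnoughProjectives C]
    (n : ℕ) where
  /-- the simple objects -/
  S : Fin n → C
  /-- the projective covers -/
  P : Fin n → C
  /-- the injective hulls -/
  I : Fin n → C
  /-- the standard objects -/
  Δ : Fin n → C
  /-- the costandard objects -/
  nabla : Fin n → C
  /-- the projective cover maps -/
  p : ∀ i, P i ⟶ S i
  /-- the injective hull maps -/
  ι : ∀ i, S i ⟶ I i
  /-- the quotient maps onto the standard objects -/
  q : ∀ i, P i ⟶ Δ i
  /-- the inclusions of the costandard objects -/
  m : ∀ i, nabla i ⟶ I i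
  /-- the Jordan–Hölder multiplicity `[X : S j]` -/
  mult : C → Fin n → ℕ
  homFinite : ∀ X Y : C, FiniteDimensional k (X ⟶ Y)
  ext1Finite : ∀ X Y : C, FiniteDimensional k (((Ext k C 1).obj (Opposite.op X)).obj Y)
  simple : ∀ i, Simple (S i)
  distinct : ∀ i j, Nonempty (S i ≅ S j) → i = j
  exhaustive : ∀ X : C, Simple X → ∃ i, Nonempty (X ≅ S i)
  projCover : ∀ i, IsProjCover (P i) (S i) (p i)
  injHull : ∀ i, IsInjHull (S i) (I i) (ι i)
  std : ∀ i, IsMaxQuotientIn (ExtClosure (fun X => ∃ j, j ≤ i ∧ Nonempty (X ≅ S j)))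
      (P i) (Δ i) (q i)
  costd : ∀ i, IsMaxSubobjectIn (ExtClosure (fun X => ∃ j, j ≤ i ∧ Nonempty (X ≅ S j)))
      (I i) (nabla i) (m i)
  mult_simple : ∀ i j, mult (S i) j = if i = j then 1 else 0
  mult_additive : ∀ T : ShortComplex C, T.ShortExact →
      ∀ j, mult T.X₂ j = mult T.X₁ j + mult T.X₃ j
  mult_eq_zero_iff : ∀ X : C, (∀ j, mult X j = 0) ↔ IsZero X

variable {k : Type v} [Field k] [IsAlgClosed k] [Abelian C] [Linear k C]
  [EnoughProjectives C] {n : ℕ}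

/-- The Serre subcategory `A_i`, i.e. the extension closure of `S 0, …, S i`. -/
def DeligneData.serre (D : DeligneData k C n) (i : Fin n) : C → Prop :=
  ExtClosure (fun X => ∃ j, j ≤ i ∧ Nonempty (X ≅ D.S j))

/-- `A` is a highest-weight category with respect to the given ordering of its simple
objects: `End (Δ i) ≅ k` and each `P i` lies in the extension closure of `Δ i, …, Δ (n-1)`. -/
def DeligneData.IsHighestWeight (D : DeligneData k C n) : Prop :=
  ∀ i, Nonempty (End (D.Δ i) ≃ₐ[k] k) ∧
    ExtClosure (fun X => ∃ j, i ≤ j ∧ Nonempty (X ≅ D.Δ j)) (D.P i)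


attribute [local instance] CategoryTheory.Abelian.hasFiniteBiproducts

/-- The length of an object: the total number of simple factors in a Jordan–Hölder
filtration. -/
def DeligneData.length (D : DeligneData k C n) (X : C) : ℕ := ∑ j, D.mult X j

/-! ### Auxiliary machinery -/

set_option linter.unusedSectionVars false

section Aux

open Module

variable (D : DeligneData k C n)

/-- Short exact sequence attached to a mono. -/
lemma shortExact_of_mono {X Y : C} (f : X ⟶ Y) [Mono f] :
    (ShortComplex.mk f (cokernel.π f) (by simp)).ShortExact :=
  ShortComplex.ShortExact.mk'
    (ShortComplex.exact_of_g_is_cokernel _ (cokernelIsCokernel f)) ‹_› inferInstance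

/-- Short exact sequence attached to an epi. -/
lemma shortExact_of_epi {X Y : C} (f : X ⟶ Y) [Epi f] :
    (ShortComplex.mk (kernel.ι f) f (by simp)).ShortExact :=
  ShortComplex.ShortExact.mk'
    (ShortComplex.exact_of_f_is_kernel _ (kernelIsKernel f)) inferInstance ‹_›

lemma DeligneData.mult_isZero {X : C} (h : IsZero X) (l : Fin n) : D.mult X l = 0 :=
  (D.mult_eq_zero_iff X).2 h l

lemma DeligneData.mult_add_of_mono {X Y : C} (f : X ⟶ Y) [Mono f] (l : Fin n) :
    D.mult X l + D.mult (cokernel f) l = D.mult Y l :=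
  (D.mult_additive _ (shortExact_of_mono f) l).symm

lemma DeligneData.mult_add_of_epi {X Y : C} (f : X ⟶ Y) [Epi f] (l : Fin n) :
    D.mult (kernel f) l + D.mult Y l = D.mult X l :=
  (D.mult_additive _ (shortExact_of_epi f) l).symm

lemma DeligneData.mult_le_of_mono {X Y : C} (f : X ⟶ Y) [Mono f] (l : Fin n) :
    D.mult X l ≤ D.mult Y l := by
  have := D.mult_add_of_mono f l; omega

lemma DeligneData.mult_le_of_epi {X Y : C} (f : X ⟶ Y) [Epi f] (l : Fin n) :
    D.mult Y l ≤ D.mult X l := by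
  have := D.mult_add_of_epi f l; omega

lemma DeligneData.mult_iso {X Y : C} (e : X ≅ Y) (l : Fin n) :
    D.mult X l = D.mult Y l :=
  le_antisymm (D.mult_le_of_mono e.hom l) (D.mult_le_of_epi e.hom l)

lemma DeligneData.length_isZero {X : C} (h : IsZero X) : D.length X = 0 :=
  Finset.sum_eq_zero fun l _ => D.mult_isZero h l

lemma DeligneData.isZero_of_length {X : C} (h : D.length X = 0) : IsZero X :=
  (D.mult_eq_zero_iff X).1 fun l => by
    have := Finset.sum_eq_zero_iff.1 h l (Finset.mem_univ l)
    exact this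

lemma DeligneData.length_pos {X : C} (h : ¬ IsZero X) : 0 < D.length X := by
  rcases Nat.eq_zero_or_pos (D.length X) with h0 | h0
  · exact absurd (D.isZero_of_length h0) h
  · exact h0

lemma DeligneData.length_add_of_mono {X Y : C} (f : X ⟶ Y) [Mono f] :
    D.length X + D.length (cokernel f) = D.length Y := by
  simpa [DeligneData.length, Finset.sum_add_distrib] using
    Finset.sum_congr rfl fun l _ => D.mult_add_of_mono f l

lemma DeligneData.length_add_of_epi {X Y : C} (f : X ⟶ Y) [Epi f] :
    D.length (kernel f) + D.length Y = D.length X := by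
  simpa [DeligneData.length, Finset.sum_add_distrib] using
    Finset.sum_congr rfl fun l _ => D.mult_add_of_epi f l

lemma DeligneData.length_le_of_mono {X Y : C} (f : X ⟶ Y) [Mono f] :
    D.length X ≤ D.length Y := by have := D.length_add_of_mono f; omega

lemma DeligneData.length_le_of_epi {X Y : C} (f : X ⟶ Y) [Epi f] :
    D.length Y ≤ D.length X := by have := D.length_add_of_epi f; omega

lemma DeligneData.length_iso {X Y : C} (e : X ≅ Y) : D.length X = D.length Y :=
  le_antisymm (D.length_le_of_mono e.hom) (D.length_le_of_epi e.hom)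

/-- An epi that preserves all multiplicities is an isomorphism. -/
lemma DeligneData.isIso_of_epi_of_mult {X Y : C} (f : X ⟶ Y) [Epi f]
    (h : D.length Y = D.length X) : IsIso f := by
  have hk : IsZero (kernel f) := by
    apply D.isZero_of_length
    have := D.length_add_of_epi f; omega
  have : Mono f := Abelian.mono_of_kernel_ι_eq_zero _ (hk.eq_of_src _ _)
  exact isIso_of_mono_of_epi f

/-- A mono that preserves all multiplicities is an isomorphism. -/
lemma DeligneData.isIso_of_mono_of_mult {X Y : C} (f : X ⟶ Y) [Mono f]
    (h : D.length X = D.length Y) : IsIso f := by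
  have hk : IsZero (cokernel f) := by
    apply D.isZero_of_length
    have := D.length_add_of_mono f; omega
  have : Epi f := Abelian.epi_of_cokernel_π_eq_zero _ (hk.eq_of_tgt _ _)
  exact isIso_of_mono_of_epi f

lemma DeligneData.simple_nonzero (i : Fin n) : ¬ IsZero (D.S i) := by
  intro h
  have := D.simple i
  have h1 : IsIso (𝟙 (D.S i)) := inferInstance
  exact ((this.mono_isIso_iff_nonzero (𝟙 (D.S i))).1 h1) (h.eq_of_src _ _)

lemma DeligneData.nonzero_of_epi_simple {X : C} {i : Fin n} (f : X ⟶ D.S i) [Epi f] :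
    ¬ IsZero X := by
  intro h
  refine D.simple_nonzero i (IsZero.of_iso ?_ (Iso.refl _))
  have hf : f = 0 := h.eq_of_src _ _
  refine (IsZero.iff_id_eq_zero _).2 ?_
  have : f ≫ 𝟙 (D.S i) = f ≫ 0 := by simp [hf]
  exact (cancel_epi f).1 (by simpa using this)

/-- A nonzero map to a simple object is an epimorphism. -/
lemma DeligneData.epi_of_nonzero_to_simple {X : C} {i : Fin n} (f : X ⟶ D.S i)
    (hf : f ≠ 0) : Epi f := by
  have h1 : image.ι f ≠ 0 := by
    intro h
    apply hf
    rw [← image.fac f, h, comp_zero]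
  have h2 : IsIso (image.ι f) := ((D.simple i).mono_isIso_iff_nonzero _).2 h1
  rw [← image.fac f]
  exact epi_comp _ _

/-- The zero map to a nonzero object is not epi; an epi onto a simple from `X` detects
nonzero quotients. Key property of the projective cover: every nonzero map `P i ⟶ S j`
factors as `p i` composed with an isomorphism backwards. -/
lemma DeligneData.factor_cover {i j : Fin n} (f : D.P i ⟶ D.S j) (hf : f ≠ 0) :
    ∃ h : D.S j ⟶ D.S i, IsIso h ∧ f ≫ h = D.p i := by
  have hepi : Epi f := D.epi_of_nonzero_to_simple f hf
  have hker : kernel.ι f ≫ D.p i = 0 := by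
    by_contra h0
    have : Epi (kernel.ι f ≫ D.p i) := D.epi_of_nonzero_to_simple _ h0
    have : Epi (kernel.ι f) := (D.projCover i).2.2 _ this
    exact hf ((cancel_epi (kernel.ι f)).1 (by simp))
  refine ⟨Abelian.epiDesc f (D.p i) hker, ?_, Abelian.comp_epiDesc _ _ _⟩
  set h := Abelian.epiDesc f (D.p i) hker with hh
  have hcomp : f ≫ h = D.p i := Abelian.comp_epiDesc _ _ _
  have hpepi : Epi (D.p i) := (D.projCover i).2.1
  have hne : h ≠ 0 := by
    intro h0
    have : Epi (0 : D.P i ⟶ D.S i) := by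
      rw [← hcomp, h0, comp_zero] at hpepi; exact hpepi
    have : IsZero (D.S i) := by
      refine (IsZero.iff_id_eq_zero _).2 ?_
      exact (cancel_epi (0 : D.P i ⟶ D.S i)).1 (by simp)
    exact D.simple_nonzero i this
  have hepih : Epi h := by
    have : Epi (f ≫ h) := by rw [hcomp]; exact hpepi
    exact epi_of_epi f h
  have hmono : Mono h := by
    refine Abelian.mono_of_kernel_ι_eq_zero _ ?_
    by_contra h0
    have : IsIso (kernel.ι h) := ((D.simple j).mono_isIso_iff_nonzero _).2 h0
    exact hne ((cancel_epi (kernel.ι h)).1 (by simp))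
  exact isIso_of_mono_of_epi h

end Aux

section Aux2

open Module

variable (D : DeligneData k C n)

lemma exists_proper_sub (X : C) (h1 : ¬ IsZero X) (h2 : ¬ Simple X) :
    ∃ (Y : C) (f : Y ⟶ X), Mono f ∧ f ≠ 0 ∧ ¬ IsIso f := by
  by_contra h
  push_neg at h
  refine h2 ⟨fun {Y} f hf => ⟨fun hiso h0 => ?_, fun h0 => ?_⟩⟩
  · refine h1 ((IsZero.iff_id_eq_zero _).2 ?_)
    calc 𝟙 X = inv f ≫ f := by simp
    _ = 0 := by simp [h0]
  · exact h Y f hf h0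

lemma DeligneData.exists_epi_to_simple_aux :
    ∀ (N : ℕ) (X : C), D.length X ≤ N → ¬ IsZero X →
      ∃ (m : Fin n) (π : X ⟶ D.S m), Epi π := by
  intro N
  induction N with
  | zero => intro X hX h; exact absurd (D.isZero_of_length (Nat.le_zero.1 hX)) h
  | succ N ih =>
    intro X hX h
    by_cases hs : Simple X
    · obtain ⟨m, ⟨e⟩⟩ := D.exhaustive X hs
      exact ⟨m, e.hom, inferInstance⟩
    · obtain ⟨Y, f, hmono, hne, hniso⟩ := exists_proper_sub X h hs
      have hYne : ¬ IsZero Y := fun hz => hne (hz.eq_of_src _ _)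
      have hcne : ¬ IsZero (cokernel f) := by
        intro hz
        have : Epi f := Abelian.epi_of_cokernel_π_eq_zero _ (hz.eq_of_tgt _ _)
        exact hniso (isIso_of_mono_of_epi f)
      have hlen := D.length_add_of_mono f
      have hY := D.length_pos hYne
      obtain ⟨m, π, hπ⟩ := ih (cokernel f) (by omega) hcne
      exact ⟨m, cokernel.π f ≫ π, epi_comp _ _⟩

lemma DeligneData.exists_epi_to_simple (X : C) (h : ¬ IsZero X) :
    ∃ (m : Fin n) (π : X ⟶ D.S m), Epi π :=
  D.exists_epi_to_simple_aux (D.length X) X le_rfl h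

/-- Objects in an extension closure of simples have no other simple factors. -/
lemma DeligneData.mult_eq_zero_of_extClosure {Φ : Fin n → Prop} {X : C}
    (hX : ExtClosure (fun X => ∃ j, Φ j ∧ Nonempty (X ≅ D.S j)) X) (l : Fin n)
    (hl : ¬ Φ l) : D.mult X l = 0 := by
  induction hX with
  | of X hX =>
    obtain ⟨j, hj, ⟨e⟩⟩ := hX
    rw [D.mult_iso e, D.mult_simple]
    have : j ≠ l := fun h => hl (h ▸ hj)
    simp [this]
  | zero X hX => exact D.mult_isZero hX l
  | ext S hS h1 h3 ih1 ih3 => rw [D.mult_additive S hS l, ih1, ih3]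

lemma DeligneData.mult_nabla_eq_zero {t l : Fin n} (h : t < l) : D.mult (D.nabla t) l = 0 :=
  D.mult_eq_zero_of_extClosure (D.costd t).2.1 l (not_le.2 h)

lemma DeligneData.mult_delta_eq_zero {t l : Fin n} (h : t < l) : D.mult (D.Δ t) l = 0 :=
  D.mult_eq_zero_of_extClosure (D.std t).2.1 l (not_le.2 h)

/-- Numerical criterion for membership in the Serre subcategory. -/
lemma DeligneData.extClosure_of_mult_aux (t : Fin n) :
    ∀ (N : ℕ) (X : C), D.length X ≤ N → (∀ l, t < l → D.mult X l = 0) →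
      ExtClosure (fun X => ∃ j, j ≤ t ∧ Nonempty (X ≅ D.S j)) X := by
  intro N
  induction N with
  | zero => intro X hX _; exact ExtClosure.zero X (D.isZero_of_length (Nat.le_zero.1 hX))
  | succ N ih =>
    intro X hX hnum
    by_cases h : IsZero X
    · exact ExtClosure.zero X h
    by_cases hs : Simple X
    · obtain ⟨m, ⟨e⟩⟩ := D.exhaustive X hs
      refine ExtClosure.of X ⟨m, ?_, ⟨e⟩⟩
      by_contra hm
      have : D.mult X m = 0 := hnum m (lt_of_not_ge hm)
      rw [D.mult_iso e, D.mult_simple] at this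
      simp at this
    · obtain ⟨Y, f, hmono, hne, hniso⟩ := exists_proper_sub X h hs
      have hYne : ¬ IsZero Y := fun hz => hne (hz.eq_of_src _ _)
      have hcne : ¬ IsZero (cokernel f) := by
        intro hz
        have : Epi f := Abelian.epi_of_cokernel_π_eq_zero _ (hz.eq_of_tgt _ _)
        exact hniso (isIso_of_mono_of_epi f)
      have hlen := D.length_add_of_mono f
      have hY := D.length_pos hYne
      have hC := D.length_pos hcne
      have hnum' : ∀ l, t < l → D.mult Y l = 0 := fun l hl =>
        Nat.le_zero.1 (hnum l hl ▸ D.mult_le_of_mono f l)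
      have hnum'' : ∀ l, t < l → D.mult (cokernel f) l = 0 := fun l hl =>
        Nat.le_zero.1 (hnum l hl ▸ D.mult_le_of_epi (cokernel.π f) l)
      exact ExtClosure.ext _ (shortExact_of_mono f)
        (ih Y (by omega) hnum') (ih (cokernel f) (by omega) hnum'')

lemma DeligneData.extClosure_of_mult (t : Fin n) (X : C)
    (hnum : ∀ l, t < l → D.mult X l = 0) :
    ExtClosure (fun X => ∃ j, j ≤ t ∧ Nonempty (X ≅ D.S j)) X :=
  D.extClosure_of_mult_aux t (D.length X) X le_rfl hnum

end Aux2

section Aux3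

open Module

variable (D : DeligneData k C n)

lemma fr_zero (W : C) {X : C} (h : IsZero X) :
    finrank k (W ⟶ X) = 0 := by
  haveI : Subsingleton (W ⟶ X) := ⟨fun a b => h.eq_of_tgt a b⟩
  exact finrank_zero_of_subsingleton

lemma fr_iso (W : C) {X Y : C} (e : X ≅ Y) :
    finrank k (W ⟶ X) = finrank k (W ⟶ Y) := by
  refine LinearEquiv.finrank_eq
    (LinearEquiv.ofLinear (Linear.rightComp k W e.hom) (Linear.rightComp k W e.inv) ?_ ?_) <;>
    ext f <;> simp

/-- Additivity of `Hom(P, -)`-dimensions along short exact sequences, for `P` projective. -/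
lemma fr_additive' (DD : DeligneData k C n) (P : C) [Projective P] {T : ShortComplex C}
    (hT : T.ShortExact) :
    finrank k (P ⟶ T.X₂) = finrank k (P ⟶ T.X₁) + finrank k (P ⟶ T.X₃) := by
  haveI := DD.homFinite P T.X₁
  haveI := DD.homFinite P T.X₂
  haveI := DD.homFinite P T.X₃
  haveI := hT.mono_f
  haveI := hT.epi_g
  set α := Linear.rightComp k P T.f with hα
  set β := Linear.rightComp k P T.g with hβ
  have hsurj : Function.Surjective β := by
    intro u
    exact ⟨Projective.factorThru u T.g, Projective.factorThru_comp _ _⟩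
  have hinj : Function.Injective α := by
    intro u v huv
    exact (cancel_mono T.f).1 huv
  have hker : LinearMap.ker β = LinearMap.range α := by
    ext u
    constructor
    · intro hu
      have hu' : u ≫ T.g = 0 := hu
      refine ⟨hT.fIsKernel.lift (KernelFork.ofι u hu'), ?_⟩
      exact Fork.IsLimit.lift_ι hT.fIsKernel
    · rintro ⟨v, rfl⟩
      have : (v ≫ T.f) ≫ T.g = 0 := by rw [Category.assoc, T.zero, comp_zero]
      exact this
  have h1 := LinearMap.finrank_range_add_finrank_ker β
  rw [LinearMap.range_eq_top.2 hsurj, finrank_top, hker] at h1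
  rw [← (LinearEquiv.ofInjective α hinj).finrank_eq] at h1
  omega

lemma DeligneData.fr_simple_ne {i j : Fin n} (h : i ≠ j) :
    finrank k (D.P i ⟶ D.S j) = 0 := by
  haveI : Subsingleton (D.P i ⟶ D.S j) := by
    refine ⟨fun a b => ?_⟩
    have hz : ∀ f : D.P i ⟶ D.S j, f = 0 := by
      intro f
      by_contra hf
      obtain ⟨g, hiso, -⟩ := D.factor_cover f hf
      exact h (D.distinct j i ⟨asIso g⟩).symm
    rw [hz a, hz b]
  exact finrank_zero_of_subsingleton

lemma DeligneData.fr_simple_self (i : Fin n) :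
    finrank k (D.P i ⟶ D.S i) = 1 := by
  haveI := D.homFinite (D.S i) (D.S i)
  haveI := D.simple i
  have hpepi : Epi (D.p i) := (D.projCover i).2.1
  have hbij : Function.Bijective (Linear.leftComp k (D.S i) (D.p i) :
      (D.S i ⟶ D.S i) →ₗ[k] (D.P i ⟶ D.S i)) := by
    constructor
    · intro u v huv
      exact (cancel_epi (D.p i)).1 huv
    · intro f
      by_cases hf : f = 0
      · exact ⟨0, by simp [hf]⟩
      · obtain ⟨g, hiso, hcomp⟩ := D.factor_cover f hf
        refine ⟨inv g, ?_⟩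
        have : D.p i ≫ inv g = f := by
          rw [← hcomp, Category.assoc, IsIso.hom_inv_id, Category.comp_id]
        exact this
  rw [← LinearEquiv.finrank_eq (LinearEquiv.ofBijective _ hbij)]
  exact finrank_endomorphism_simple_eq_one k (D.S i)

/-- For objects with a finite filtration by the given simples, `dim Hom(P i, X)` computes
the multiplicity of `S i`. -/
lemma DeligneData.fr_eq_mult (i : Fin n) {Φ : Fin n → Prop} {X : C}
    (hX : ExtClosure (fun X => ∃ j, Φ j ∧ Nonempty (X ≅ D.S j)) X) :
    finrank k (D.P i ⟶ X) = D.mult X i := by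
  haveI : Projective (D.P i) := (D.projCover i).1
  induction hX with
  | of X hX =>
    obtain ⟨j, hj, ⟨e⟩⟩ := hX
    rw [fr_iso (k := k) _ e, D.mult_iso e, D.mult_simple]
    by_cases h : i = j
    · subst h; rw [D.fr_simple_self]; simp
    · rw [D.fr_simple_ne h]
      have : ¬ (j = i) := fun hh => h hh.symm
      simp [this]
  | zero X hX => rw [fr_zero (k := k) _ hX, D.mult_isZero hX]
  | ext S hS h1 h3 ih1 ih3 =>
    rw [fr_additive' D _ hS, D.mult_additive S hS, ih1, ih3]

end Aux3


section Aux4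

open Module

variable (D : DeligneData k C n)

lemma DeligneData.mult_biprod (X Y : C) (l : Fin n) :
    D.mult (X ⊞ Y) l = D.mult X l + D.mult Y l :=
  D.mult_additive _
    (ShortComplex.ShortExact.mk'
      ((ShortComplex.Splitting.ofHasBinaryBiproduct X Y).exact)
      inferInstance inferInstance) l

/-- `Δ t` is relatively projective: any epi onto `Δ t` whose kernel lies in `A t` splits. -/
lemma DeligneData.split_of_delta_quot {t : Fin n} {Y : C} (β : Y ⟶ D.Δ t) [Epi β]
    (hker : ∀ l, t < l → D.mult (kernel β) l = 0) :
    ∃ σ : D.Δ t ⟶ Y, σ ≫ β = 𝟙 (D.Δ t) := by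
  haveI : Projective (D.P t) := (D.projCover t).1
  have hqepi : Epi (D.q t) := (D.std t).1
  set qt : D.P t ⟶ Y := Projective.factorThru (D.q t) β with hqt
  have hfac : qt ≫ β = D.q t := Projective.factorThru_comp _ _
  have hYnum : ∀ l, t < l → D.mult Y l = 0 := by
    intro l hl
    have h1 := D.mult_add_of_epi β l
    have h2 := D.mult_delta_eq_zero hl
    have h3 := hker l hl
    omega
  have hVnum : ∀ l, t < l → D.mult (image qt) l = 0 := fun l hl =>
    Nat.le_zero.1 (hYnum l hl ▸ D.mult_le_of_mono (image.ι qt) l)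
  obtain ⟨r, hr⟩ := (D.std t).2.2 (factorThruImage qt) inferInstance
    (D.extClosure_of_mult t _ hVnum)
  refine ⟨r ≫ image.ι qt, ?_⟩
  rw [← cancel_epi (D.q t)]
  calc D.q t ≫ (r ≫ image.ι qt) ≫ β = ((D.q t ≫ r) ≫ image.ι qt) ≫ β := by
        simp only [Category.assoc]
  _ = (factorThruImage qt ≫ image.ι qt) ≫ β := by rw [hr]
  _ = qt ≫ β := by rw [image.fac]
  _ = D.q t ≫ 𝟙 _ := by rw [hfac, Category.comp_id]

/-- Morphisms from `Δ t` lift along epimorphisms whose kernel lies in `A t`. -/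
lemma DeligneData.lift_of_delta {t : Fin n} {Y L' : C} (π : Y ⟶ L') [Epi π]
    (hker : ∀ l, t < l → D.mult (kernel π) l = 0) (ha : D.Δ t ⟶ L') :
    ∃ h : D.Δ t ⟶ Y, h ≫ π = ha := by
  have hnegepi : Epi (-π) := by
    have : -π = π ≫ (-𝟙 L') := by simp
    rw [this]; exact epi_comp _ _
  set d : D.Δ t ⊞ Y ⟶ L' := biprod.desc ha (-π) with hd
  have hdepi : Epi d := by
    refine Preadditive.epi_of_cancel_zero _ (fun g hg => ?_)
    have h1 : (-π) ≫ g = 0 := by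
      have := biprod.inr ≫= hg
      simpa [hd] using this
    exact (cancel_epi (-π)).1 (by simpa using h1)
  set kι : kernel d ⟶ D.Δ t ⊞ Y := kernel.ι d with hkι
  set fst' : kernel d ⟶ D.Δ t := kι ≫ biprod.fst with hfst'
  have hkιd : kι ≫ d = 0 := kernel.condition d
  have hkey : kι ≫ biprod.snd ≫ π = kι ≫ biprod.fst ≫ ha := by
    have h0 : kι ≫ (biprod.fst ≫ biprod.inl + biprod.snd ≫ biprod.inr) ≫ d = 0 := by
      rw [biprod.total, Category.id_comp]; exact hkιd
    simp only [Preadditive.add_comp, Preadditive.comp_add, Category.assoc,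
      biprod.inl_desc, biprod.inr_desc, Preadditive.comp_neg, hd] at h0
    have h1 : kι ≫ biprod.fst ≫ ha - kι ≫ biprod.snd ≫ π = 0 := by
      rw [sub_eq_add_neg]; exact h0
    have := sub_eq_zero.1 h1
    exact this.symm
  -- fst' is epi
  have hfstepi : Epi fst' := by
    refine Preadditive.epi_of_cancel_zero _ (fun g hg => ?_)
    have h0 : kι ≫ (biprod.fst ≫ g) = 0 := by
      rw [← Category.assoc]; exact hg
    obtain ⟨w, hw⟩ := CokernelCofork.IsColimit.desc'
      (Abelian.epiIsCokernelOfKernel _ (kernelIsKernel d)) (biprod.fst ≫ g) h0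
    dsimp at hw
    have h1 : (-π) ≫ w = 0 := by
      have h2 := biprod.inr ≫= hw
      simp only [← Category.assoc, biprod.inr_desc, hd] at h2
      simpa using h2.symm
    have hw0 : w = 0 := (cancel_epi (-π)).1 (by simpa using h1)
    rw [hw0, comp_zero] at hw
    have h3 := biprod.inl ≫= hw.symm
    simpa using h3
  -- multiplicity of the kernel of fst'
  have hkerfst : ∀ l, t < l → D.mult (kernel fst') l = 0 := by
    intro l hl
    have h1 := D.mult_add_of_epi d l
    have h2 := D.mult_biprod (D.Δ t) Y l
    have h3 := D.mult_add_of_epi π l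
    have h4 := D.mult_add_of_epi fst' l
    have h5 := hker l hl
    have h6 := D.mult_delta_eq_zero hl
    omega
  obtain ⟨σ, hσ⟩ := D.split_of_delta_quot fst' hkerfst
  refine ⟨σ ≫ kι ≫ biprod.snd, ?_⟩
  calc (σ ≫ kι ≫ biprod.snd) ≫ π = σ ≫ (kι ≫ biprod.snd ≫ π) := by
        simp only [Category.assoc]
  _ = σ ≫ (kι ≫ biprod.fst ≫ ha) := by rw [hkey]
  _ = (σ ≫ fst') ≫ ha := by simp only [hfst', Category.assoc]
  _ = ha := by rw [hσ, Category.id_comp]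

/-- Restriction to a subobject with cokernel in `A t` is surjective on maps to `∇ t`. -/
lemma DeligneData.hom_ext_lift {t : Fin n} {K P' : C} (κ : K ⟶ P') [Mono κ]
    (hco : ∀ l, t < l → D.mult (cokernel κ) l = 0) (f : K ⟶ D.nabla t) :
    ∃ g : P' ⟶ D.nabla t, κ ≫ g = f := by
  haveI : Injective (D.I t) := (D.injHull t).1
  haveI : Mono (D.m t) := (D.costd t).1
  set tm : K ⟶ D.nabla t ⊞ P' := biprod.lift f (-κ) with htm
  have htmono : Mono tm := by
    refine Preadditive.mono_of_cancel_zero _ (fun g hg => ?_)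
    have h1 : g ≫ (-κ) = 0 := by
      have := hg =≫ biprod.snd
      simpa [htm] using this
    exact (cancel_mono κ).1 (by simpa using h1)
  set π : D.nabla t ⊞ P' ⟶ cokernel tm := cokernel.π tm with hπ
  set inlE : D.nabla t ⟶ cokernel tm := biprod.inl ≫ π with hinlE
  have htmπ : tm ≫ π = 0 := cokernel.condition tm
  have hkey : κ ≫ biprod.inr ≫ π = f ≫ inlE := by
    have e : tm = f ≫ biprod.inl + (-κ) ≫ biprod.inr := by
      apply biprod.hom_ext <;> simp [htm]
    have h1 : f ≫ (biprod.inl ≫ π) + (-κ) ≫ (biprod.inr ≫ π) = 0 := by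
      rw [← Category.assoc, ← Category.assoc, ← Preadditive.add_comp, ← e]; exact htmπ
    rw [Preadditive.neg_comp] at h1
    have h4 : f ≫ (biprod.inl ≫ π) - κ ≫ (biprod.inr ≫ π) = 0 := by
      rw [sub_eq_add_neg]; exact h1
    rw [hinlE]
    exact (sub_eq_zero.1 h4).symm
  have hinlmono : Mono inlE := by
    refine Preadditive.mono_of_cancel_zero _ (fun g hg => ?_)
    have h0 : (g ≫ biprod.inl) ≫ π = 0 := by
      simpa [hinlE, Category.assoc] using hg
    obtain ⟨z, hz⟩ := KernelFork.IsLimit.lift'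
      (Abelian.monoIsKernelOfCokernel _ (cokernelIsCokernel tm)) (g ≫ biprod.inl) h0
    dsimp at hz
    have h1 : z ≫ (-κ) = 0 := by
      have := hz =≫ biprod.snd
      simpa [htm, Category.assoc] using this
    have hz0 : z = 0 := (cancel_mono κ).1 (by simpa using h1)
    rw [hz0, zero_comp] at hz
    have h2 := hz.symm =≫ biprod.fst
    simpa using h2
  set h : cokernel tm ⟶ D.I t := Injective.factorThru (D.m t) inlE with hh
  have hfach : inlE ≫ h = D.m t := Injective.comp_factorThru _ _
  have hEnum : ∀ l, t < l → D.mult (cokernel tm) l = 0 := by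
    intro l hl
    have h1 := D.mult_add_of_mono tm l
    have h2 := D.mult_biprod (D.nabla t) P' l
    have h3 := D.mult_add_of_mono κ l
    have h4 := hco l hl
    have h5 := D.mult_nabla_eq_zero hl
    omega
  have hVnum : ∀ l, t < l → D.mult (image h) l = 0 := fun l hl =>
    Nat.le_zero.1 (hEnum l hl ▸ D.mult_le_of_epi (factorThruImage h) l)
  obtain ⟨r, hr⟩ := (D.costd t).2.2 (image.ι h) inferInstance
    (D.extClosure_of_mult t _ hVnum)
  have hsect : inlE ≫ factorThruImage h ≫ r = 𝟙 (D.nabla t) := by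
    rw [← cancel_mono (D.m t)]
    calc (inlE ≫ factorThruImage h ≫ r) ≫ D.m t
        = inlE ≫ factorThruImage h ≫ (r ≫ D.m t) := by simp only [Category.assoc]
    _ = inlE ≫ factorThruImage h ≫ image.ι h := by rw [hr]
    _ = inlE ≫ h := by rw [image.fac]
    _ = 𝟙 _ ≫ D.m t := by rw [hfach, Category.id_comp]
  refine ⟨biprod.inr ≫ π ≫ factorThruImage h ≫ r, ?_⟩
  calc κ ≫ biprod.inr ≫ π ≫ factorThruImage h ≫ r
      = (κ ≫ biprod.inr ≫ π) ≫ factorThruImage h ≫ r := by simp only [Category.assoc]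
  _ = (f ≫ inlE) ≫ factorThruImage h ≫ r := by rw [hkey]
  _ = f ≫ (inlE ≫ factorThruImage h ≫ r) := by simp only [Category.assoc]
  _ = f := by rw [hsect, Category.comp_id]

end Aux4

section Aux5

open Module

variable (D : DeligneData k C n)

lemma epi_zero_isZero {X Y : C} (h : Epi (0 : X ⟶ Y)) : IsZero Y := by
  rw [IsZero.iff_id_eq_zero]
  exact (cancel_epi (0 : X ⟶ Y)).1 (by simp)

lemma isZero_biproduct_empty (f : Fin 0 → C) : IsZero (⨁ f) := by
  rw [IsZero.iff_id_eq_zero]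
  apply biproduct.hom_ext
  intro j
  exact j.elim0

noncomputable def biprodFinSucc (X : C) (T : ℕ) :
    X ⊞ (⨁ (fun _ : Fin T => X)) ≅ ⨁ (fun _ : Fin (T + 1) => X) where
  hom := biprod.desc (biproduct.ι (fun _ : Fin (T + 1) => X) 0)
    (biproduct.desc fun a => biproduct.ι (fun _ : Fin (T + 1) => X) a.succ)
  inv := biproduct.desc
    (Fin.cases biprod.inl (fun a => biproduct.ι (fun _ : Fin T => X) a ≫ biprod.inr))
  hom_inv_id := by
    apply biprod.hom_ext'
    · simp
    · apply biproduct.hom_ext'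
      intro a
      simp
  inv_hom_id := by
    apply biproduct.hom_ext'
    intro b
    induction b using Fin.cases with
    | zero => simp
    | succ a => simp

/-- Peeling off one standard subobject from a homogeneous layer. -/
lemma DeligneData.peel {t : Fin n} {L : C} (hL : ¬ IsZero L)
    (hnum : ∀ l, t < l → D.mult L l = 0)
    (hquot : ∀ (W : C) (ρ : L ⟶ W), Epi ρ → (∀ l, t ≤ l → D.mult W l = 0) → IsZero W) :
    ∃ (Z : C) (ziL : Z ⟶ L) (ρZ : D.Δ t ⟶ Z) (πS : L ⟶ D.S t),
      Mono ziL ∧ Epi ρZ ∧ Epi πS ∧ ziL ≫ πS ≠ 0 ∧ ¬ IsZero Z := by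
  obtain ⟨m, πS', hepi⟩ := D.exists_epi_to_simple L hL
  have hmt : m = t := by
    have h1 : ¬ t < m := by
      intro hlt
      have h2 : D.mult (D.S m) m ≤ D.mult L m := D.mult_le_of_epi πS' m
      rw [D.mult_simple, hnum m hlt] at h2
      simp at h2
    have h2 : ¬ m < t := by
      intro hlt
      refine D.simple_nonzero m (hquot (D.S m) πS' hepi ?_)
      intro l hl
      rw [D.mult_simple]
      have : m ≠ l := by
        intro h; subst h
        exact absurd (lt_of_lt_of_le hlt hl) (lt_irrefl _)
      simp [this]
    omega
  subst hmt
  set πS := πS'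
  haveI : Projective (D.P m) := (D.projCover m).1
  set φ : D.P m ⟶ L := Projective.factorThru (D.p m) πS with hφ
  have hfac : φ ≫ πS = D.p m := Projective.factorThru_comp _ _
  have hpne : D.p m ≠ 0 := by
    intro h0
    have : Epi (D.p m) := (D.projCover m).2.1
    rw [h0] at this
    exact D.simple_nonzero m (epi_zero_isZero this)
  have hιπ : image.ι φ ≫ πS ≠ 0 := by
    intro h0
    refine hpne ?_
    rw [← hfac, ← image.fac φ, Category.assoc, h0, comp_zero]
  have hZne : ¬ IsZero (image φ) := by
    intro h0
    exact hιπ (by rw [h0.eq_of_src (image.ι φ) 0, zero_comp])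
  have hZnum : ∀ l, m < l → D.mult (image φ) l = 0 := fun l hl =>
    Nat.le_zero.1 (hnum l hl ▸ D.mult_le_of_mono (image.ι φ) l)
  obtain ⟨r, hr⟩ := (D.std m).2.2 (factorThruImage φ) inferInstance
    (D.extClosure_of_mult m _ hZnum)
  have hrepi : Epi r := by
    have : Epi (D.q m ≫ r) := by rw [hr]; exact inferInstance
    exact epi_of_epi (D.q m) r
  exact ⟨image φ, image.ι φ, r, πS, inferInstance, hrepi, hepi, hιπ, hZne⟩

/-- Numerical bound for a homogeneous layer: `[L : S l] ≤ dim Hom(L, S t) · [Δ t : S l]`. -/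
lemma DeligneData.layer_bound {t : Fin n} :
    ∀ (N : ℕ) (L : C), D.length L ≤ N →
      (∀ l, t < l → D.mult L l = 0) →
      (∀ (W : C) (ρ : L ⟶ W), Epi ρ → (∀ l, t ≤ l → D.mult W l = 0) → IsZero W) →
      ∀ l, D.mult L l ≤ finrank k (L ⟶ D.S t) * D.mult (D.Δ t) l := by
  intro N
  induction N with
  | zero =>
    intro L hN _ _ l
    rw [D.mult_isZero (D.isZero_of_length (Nat.le_zero.1 hN))]
    exact Nat.zero_le _
  | succ N ih =>
    intro L hN hnum hquot l
    by_cases hL : IsZero L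
    · rw [D.mult_isZero hL]; exact Nat.zero_le _
    obtain ⟨Z, ziL, ρZ, πS, hmono, hρepi, hπepi, hne, hZne⟩ := D.peel hL hnum hquot
    haveI := hmono
    haveI := hρepi
    haveI := hπepi
    haveI := D.homFinite L (D.S t)
    haveI := D.homFinite (cokernel ziL) (D.S t)
    set L' := cokernel ziL with hL'
    set π' : L ⟶ L' := cokernel.π ziL with hπ'
    have hnum' : ∀ l', t < l' → D.mult L' l' = 0 := fun l' hl' =>
      Nat.le_zero.1 (hnum l' hl' ▸ D.mult_le_of_epi π' l')
    have hquot' : ∀ (W : C) (ρ : L' ⟶ W), Epi ρ → (∀ l', t ≤ l' → D.mult W l' = 0) →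
        IsZero W := fun W ρ hρ hW => hquot W (π' ≫ ρ) (epi_comp _ _) hW
    have hlZ : 0 < D.length Z := D.length_pos hZne
    have hlen : D.length Z + D.length L' = D.length L := D.length_add_of_mono ziL
    have hN' : D.length L' ≤ N := by omega
    have hfrlt : finrank k (L' ⟶ D.S t) < finrank k (L ⟶ D.S t) := by
      set Ψ : (L' ⟶ D.S t) →ₗ[k] (L ⟶ D.S t) := Linear.leftComp k (D.S t) π' with hΨ
      have hinj : Function.Injective Ψ := fun u v huv => (cancel_epi π').1 huv
      have hne' : LinearMap.range Ψ ≠ ⊤ := by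
        intro htop
        have : πS ∈ LinearMap.range Ψ := htop ▸ Submodule.mem_top
        obtain ⟨w, hw⟩ := this
        apply hne
        have : ziL ≫ πS = ziL ≫ π' ≫ w := by rw [← hw]; rfl
        rw [this, ← Category.assoc, cokernel.condition, zero_comp]
      calc finrank k (L' ⟶ D.S t) = finrank k (LinearMap.range Ψ) :=
            (LinearEquiv.ofInjective Ψ hinj).finrank_eq
      _ < finrank k (L ⟶ D.S t) := Submodule.finrank_lt hne'
    have ihL' := ih L' hN' hnum' hquot' l
    have hZle : D.mult Z l ≤ D.mult (D.Δ t) l := D.mult_le_of_epi ρZ l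
    have hmadd : D.mult Z l + D.mult L' l = D.mult L l := D.mult_add_of_mono ziL l
    calc D.mult L l = D.mult Z l + D.mult L' l := hmadd.symm
    _ ≤ (1 + finrank k (L' ⟶ D.S t)) * D.mult (D.Δ t) l := by
        rw [add_mul, one_mul]; omega
    _ ≤ finrank k (L ⟶ D.S t) * D.mult (D.Δ t) l :=
        Nat.mul_le_mul_right _ (by omega)

lemma DeligneData.length_layer_bound {t : Fin n} (L : C)
    (hnum : ∀ l, t < l → D.mult L l = 0)
    (hquot : ∀ (W : C) (ρ : L ⟶ W), Epi ρ → (∀ l, t ≤ l → D.mult W l = 0) → IsZero W) :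
    D.length L ≤ finrank k (L ⟶ D.S t) * D.length (D.Δ t) := by
  calc D.length L = ∑ l, D.mult L l := rfl
  _ ≤ ∑ l, finrank k (L ⟶ D.S t) * D.mult (D.Δ t) l :=
      Finset.sum_le_sum fun l _ => D.layer_bound (D.length L) L le_rfl hnum hquot l
  _ = finrank k (L ⟶ D.S t) * D.length (D.Δ t) := by
      rw [DeligneData.length, Finset.mul_sum]

/-- In the equality case, a homogeneous layer is a direct sum of standard objects. -/
lemma DeligneData.layer_iso {t : Fin n} :
    ∀ (T : ℕ) (L : C),
      (∀ l, t < l → D.mult L l = 0) →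
      (∀ (W : C) (ρ : L ⟶ W), Epi ρ → (∀ l, t ≤ l → D.mult W l = 0) → IsZero W) →
      finrank k (L ⟶ D.S t) = T →
      D.length L = T * D.length (D.Δ t) →
      0 < D.length (D.Δ t) →
      Nonempty (L ≅ ⨁ (fun _ : Fin T => D.Δ t)) := by
  intro T
  induction T with
  | zero =>
    intro L _ _ _ hlen _
    have hz : IsZero L := D.isZero_of_length (by simpa using hlen)
    exact ⟨hz.isoZero.trans (isZero_biproduct_empty _).isoZero.symm⟩
  | succ T ih =>
    intro L hnum hquot hfr hlen hΔpos
    have hL : ¬ IsZero L := by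
      intro h0
      rw [D.length_isZero h0] at hlen
      have : 0 < (T + 1) * D.length (D.Δ t) := Nat.mul_pos (Nat.succ_pos T) hΔpos
      omega
    obtain ⟨Z, ziL, ρZ, πS, hmono, hρepi, hπepi, hne, hZne⟩ := D.peel hL hnum hquot
    haveI := hmono
    haveI := hρepi
    haveI := hπepi
    haveI := D.homFinite L (D.S t)
    haveI := D.homFinite (cokernel ziL) (D.S t)
    set L' := cokernel ziL with hL'
    set π' : L ⟶ L' := cokernel.π ziL with hπ'
    have hnum' : ∀ l', t < l' → D.mult L' l' = 0 := fun l' hl' =>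
      Nat.le_zero.1 (hnum l' hl' ▸ D.mult_le_of_epi π' l')
    have hquot' : ∀ (W : C) (ρ : L' ⟶ W), Epi ρ → (∀ l', t ≤ l' → D.mult W l' = 0) →
        IsZero W := fun W ρ hρ hW => hquot W (π' ≫ ρ) (epi_comp _ _) hW
    -- dimension count
    have hfrlt : finrank k (L' ⟶ D.S t) < finrank k (L ⟶ D.S t) := by
      set Ψ : (L' ⟶ D.S t) →ₗ[k] (L ⟶ D.S t) := Linear.leftComp k (D.S t) π' with hΨ
      have hinj : Function.Injective Ψ := fun u v huv => (cancel_epi π').1 huv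
      have hne' : LinearMap.range Ψ ≠ ⊤ := by
        intro htop
        have : πS ∈ LinearMap.range Ψ := htop ▸ Submodule.mem_top
        obtain ⟨w, hw⟩ := this
        apply hne
        have : ziL ≫ πS = ziL ≫ π' ≫ w := by rw [← hw]; rfl
        rw [this, ← Category.assoc, cokernel.condition, zero_comp]
      calc finrank k (L' ⟶ D.S t) = finrank k (LinearMap.range Ψ) :=
            (LinearEquiv.ofInjective Ψ hinj).finrank_eq
      _ < finrank k (L ⟶ D.S t) := Submodule.finrank_lt hne'
    have hL'bound : D.length L' ≤ finrank k (L' ⟶ D.S t) * D.length (D.Δ t) :=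
      D.length_layer_bound L' hnum' hquot'
    have hZle : D.length Z ≤ D.length (D.Δ t) := D.length_le_of_epi ρZ
    have hlenadd : D.length Z + D.length L' = D.length L := D.length_add_of_mono ziL
    have hfr' : finrank k (L' ⟶ D.S t) ≤ T := by omega
    have hL'le : D.length L' ≤ T * D.length (D.Δ t) :=
      le_trans hL'bound (Nat.mul_le_mul_right _ hfr')
    have hZeq : D.length Z = D.length (D.Δ t) := by
      have : (T + 1) * D.length (D.Δ t) = T * D.length (D.Δ t) + D.length (D.Δ t) := by ring
      omega
    have hL'eq : D.length L' = T * D.length (D.Δ t) := by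
      have : (T + 1) * D.length (D.Δ t) = T * D.length (D.Δ t) + D.length (D.Δ t) := by ring
      omega
    have hfr'eq : finrank k (L' ⟶ D.S t) = T := by
      have h1 : T * D.length (D.Δ t) ≤ finrank k (L' ⟶ D.S t) * D.length (D.Δ t) :=
        hL'eq ▸ hL'bound
      have h2 : T ≤ finrank k (L' ⟶ D.S t) := Nat.le_of_mul_le_mul_right h1 hΔpos
      omega
    haveI hiso : IsIso ρZ := D.isIso_of_epi_of_mult ρZ hZeq
    obtain ⟨e'⟩ := ih L' hnum' hquot' hfr'eq hL'eq hΔpos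
    -- construct a section of π'
    have hkerπ' : ∀ l, t < l → D.mult (kernel π') l = 0 := by
      intro l hl
      have h1 := D.mult_add_of_epi π' l
      have h2 := hnum l hl
      omega
    have hlift : ∀ a : Fin T, ∃ h : D.Δ t ⟶ L,
        h ≫ π' = biproduct.ι (fun _ : Fin T => D.Δ t) a ≫ e'.inv :=
      fun a => D.lift_of_delta π' hkerπ' _
    choose σa hσa using hlift
    set σ : L' ⟶ L := e'.hom ≫ biproduct.desc σa with hσdef
    have hσπ : σ ≫ π' = 𝟙 L' := by
      have h1 : biproduct.desc σa ≫ π' = e'.inv := by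
        apply biproduct.hom_ext'
        intro a
        rw [← Category.assoc, biproduct.ι_desc, hσa]
      rw [hσdef, Category.assoc, h1, e'.hom_inv_id]
    have hzc : ziL ≫ cokernel.π (biprod.desc ziL σ) = 0 := by
      have h := cokernel.condition (biprod.desc ziL σ)
      have h2 := biprod.inl ≫= h
      rw [← Category.assoc, biprod.inl_desc] at h2
      simpa using h2
    have hsc : σ ≫ cokernel.π (biprod.desc ziL σ) = 0 := by
      have h := cokernel.condition (biprod.desc ziL σ)
      have h2 := biprod.inr ≫= h
      rw [← Category.assoc, biprod.inr_desc] at h2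
      simpa using h2
    have hc0 : cokernel.π (biprod.desc ziL σ) = 0 := by
      have hw : π' ≫ cokernel.desc ziL (cokernel.π (biprod.desc ziL σ)) hzc
          = cokernel.π (biprod.desc ziL σ) := cokernel.π_desc _ _ _
      have hw0 : cokernel.desc ziL (cokernel.π (biprod.desc ziL σ)) hzc = 0 := by
        have h1 : σ ≫ π' ≫ cokernel.desc ziL (cokernel.π (biprod.desc ziL σ)) hzc = 0 := by
          rw [hw]; exact hsc
        rw [← Category.assoc, hσπ, Category.id_comp] at h1
        exact h1
      rw [← hw, hw0, comp_zero]
    haveI hΦepi : Epi (biprod.desc ziL σ) := Abelian.epi_of_cokernel_π_eq_zero _ hc0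
    have hΦlen : D.length L = D.length (Z ⊞ L') := by
      have h1 : ∀ l, D.mult (Z ⊞ L') l = D.mult Z l + D.mult L' l :=
        fun l => D.mult_biprod Z L' l
      have h2 : D.length (Z ⊞ L') = D.length Z + D.length L' := by
        calc D.length (Z ⊞ L') = ∑ l, (D.mult Z l + D.mult L' l) :=
              Finset.sum_congr rfl fun l _ => h1 l
        _ = D.length Z + D.length L' := Finset.sum_add_distrib
      omega
    haveI hΦiso : IsIso (biprod.desc ziL σ) := D.isIso_of_epi_of_mult _ hΦlen
    exact ⟨(asIso (biprod.desc ziL σ)).symm.trans ((biprod.mapIso (asIso ρZ).symm e').trans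
      (biprodFinSucc (D.Δ t) T))⟩

end Aux5

section Aux6

open Module

variable (D : DeligneData k C n)

lemma K0.cls_eq_add {T : ShortComplex C} (hT : T.ShortExact) :
    K0.cls T.X₂ = K0.cls T.X₁ + K0.cls T.X₃ := by
  have hmem : FreeAbelianGroup.of T.X₂ - FreeAbelianGroup.of T.X₁ - FreeAbelianGroup.of T.X₃
      ∈ K0Relations C := AddSubgroup.subset_closure ⟨T, hT, rfl⟩
  show (QuotientAddGroup.mk _ : FreeAbelianGroup C ⧸ K0Relations C) = QuotientAddGroup.mk _ + QuotientAddGroup.mk _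
  refine Eq.trans ?_ (QuotientAddGroup.mk_add _ _ _)
  rw [QuotientAddGroup.eq]
  have := (K0Relations C).neg_mem hmem
  convert this using 1
  abel

lemma K0.cls_zero_of_isZero {X : C} (h : IsZero X) : K0.cls X = 0 := by
  have hse : (ShortComplex.mk (𝟙 X) (𝟙 X) (h.eq_of_src _ _)).ShortExact :=
    ShortComplex.ShortExact.mk' (ShortComplex.exact_of_isZero_X₂ _ h)
      inferInstance inferInstance
  have := K0.cls_eq_add hse
  exact left_eq_add.1 this

lemma K0.cls_iso {X Y : C} (e : X ≅ Y) : K0.cls X = K0.cls Y := by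
  open ZeroObject in
  haveI : Epi (0 : Y ⟶ (0 : C)) := ⟨fun g h _ => (isZero_zero C).eq_of_src g h⟩
  have hse : (ShortComplex.mk e.hom (0 : Y ⟶ (0 : C)) (comp_zero)).ShortExact :=
    ShortComplex.ShortExact.mk'
      ((ShortComplex.exact_iff_epi _ rfl).2 inferInstance) inferInstance inferInstance
  have h1 := K0.cls_eq_add hse
  rw [K0.cls_zero_of_isZero (isZero_zero C), add_zero] at h1
  exact h1.symm

/-- The multiplicity function descends to the Grothendieck group. -/
noncomputable def DeligneData.multHom (l : Fin n) : K0 C →+ ℤ :=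
  QuotientAddGroup.lift (K0Relations C)
    (FreeAbelianGroup.lift (fun X => (D.mult X l : ℤ)))
    (by
      intro x hx
      have hle : K0Relations C ≤
          (FreeAbelianGroup.lift (fun X => (D.mult X l : ℤ))).ker := by
        rw [K0Relations, AddSubgroup.closure_le]
        rintro y ⟨T, hT, rfl⟩
        have hadd := D.mult_additive T hT l
        simp only [SetLike.mem_coe, AddMonoidHom.mem_ker, map_sub,
          FreeAbelianGroup.lift_apply_of, hadd]
        push_cast
        ring
      exact AddMonoidHom.mem_ker.1 (hle hx))

lemma DeligneData.multHom_cls (l : Fin n) (X : C) :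
    D.multHom l (K0.cls X) = (D.mult X l : ℤ) := by
  show QuotientAddGroup.lift _ _ _ (QuotientAddGroup.mk _) = _
  refine (QuotientAddGroup.lift_mk _ _ _).trans ?_
  exact FreeAbelianGroup.lift_apply_of ..

lemma DeligneData.cls_eq_sum_aux :
    ∀ (N : ℕ) (X : C), D.length X ≤ N →
      K0.cls X = ∑ l, (D.mult X l) • K0.cls (D.S l) := by
  intro N
  induction N with
  | zero =>
    intro X hX
    have hz := D.isZero_of_length (Nat.le_zero.1 hX)
    rw [K0.cls_zero_of_isZero hz]
    rw [Finset.sum_congr rfl (fun l _ => by rw [D.mult_isZero hz, zero_smul])]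
    simp
  | succ N ih =>
    intro X hX
    by_cases h : IsZero X
    · rw [K0.cls_zero_of_isZero h]
      rw [Finset.sum_congr rfl (fun l _ => by rw [D.mult_isZero h, zero_smul])]
      simp
    by_cases hs : Simple X
    · obtain ⟨m, ⟨e⟩⟩ := D.exhaustive X hs
      rw [K0.cls_iso e]
      have hm : ∀ l, D.mult X l = if m = l then 1 else 0 := fun l => by
        rw [D.mult_iso e, D.mult_simple]
      rw [Finset.sum_congr rfl (fun l _ => by rw [hm l, ite_smul, one_smul, zero_smul])]
      rw [Finset.sum_ite_eq]
      simp
    · obtain ⟨Y, f, hmono, hne, hniso⟩ := exists_proper_sub X h hs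
      haveI := hmono
      have hYne : ¬ IsZero Y := fun hz => hne (hz.eq_of_src _ _)
      have hcne : ¬ IsZero (cokernel f) := by
        intro hz
        have : Epi f := Abelian.epi_of_cokernel_π_eq_zero _ (hz.eq_of_tgt _ _)
        exact hniso (isIso_of_mono_of_epi f)
      have hlen := D.length_add_of_mono f
      have hY := D.length_pos hYne
      have hC := D.length_pos hcne
      have h1 := K0.cls_eq_add (shortExact_of_mono f)
      dsimp at h1
      rw [h1, ih Y (by omega), ih (cokernel f) (by omega), ← Finset.sum_add_distrib]
      refine Finset.sum_congr rfl (fun l _ => ?_)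
      rw [← add_smul]
      rw [D.mult_add_of_mono f l]

lemma DeligneData.cls_eq_sum (X : C) :
    K0.cls X = ∑ l, (D.mult X l) • K0.cls (D.S l) :=
  D.cls_eq_sum_aux (D.length X) X le_rfl

end Aux6

section Aux7

open Module

variable (D : DeligneData k C n)

/-- The numerical Serre class: all simple factors have index `< c`. -/
def DeligneData.NumClass (c : ℕ) (X : C) : Prop :=
  ∀ l : Fin n, c ≤ (l : ℕ) → D.mult X l = 0

lemma DeligneData.exists_max_quot (P' : C) (c : ℕ) :
    ∃ (Q : C) (e : P' ⟶ Q), Epi e ∧ D.NumClass c Q ∧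
      ∀ (W : C) (e' : P' ⟶ W), Epi e' → D.NumClass c W → D.length W ≤ D.length Q := by
  classical
  set pred : ℕ → Prop :=
    fun d => ∃ (W : C) (e' : P' ⟶ W), Epi e' ∧ D.NumClass c W ∧ D.length W = d with hpred
  have h0 : pred 0 := by
    open ZeroObject in
    exact ⟨0, 0, ⟨fun g h _ => (isZero_zero C).eq_of_src g h⟩,
      fun l _ => D.mult_isZero (isZero_zero C) l, D.length_isZero (isZero_zero C)⟩
  have hbd : ∀ d, pred d → d ≤ D.length P' := by
    rintro d ⟨W, e', he', -, rfl⟩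
    haveI := he'
    exact D.length_le_of_epi e'
  obtain ⟨W, e', he', hnum, hlen⟩ :=
    Nat.findGreatest_spec (P := pred) (m := 0) (Nat.zero_le _) h0
  refine ⟨W, e', he', hnum, ?_⟩
  intro W' e'' he'' hnum'
  have hp : pred (D.length W') := ⟨W', e'', he'', hnum', rfl⟩
  have h1 : D.length W' ≤ Nat.findGreatest pred (D.length P') :=
    Nat.le_findGreatest (hbd _ hp) hp
  rw [hlen]
  exact h1

lemma DeligneData.max_quot_factor {P' Q W : C} {c : ℕ} (eQ : P' ⟶ Q) (eW : P' ⟶ W)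
    (heQ : Epi eQ) (heW : Epi eW) (hQn : D.NumClass c Q) (hWn : D.NumClass c W)
    (hmax : ∀ (V : C) (e' : P' ⟶ V), Epi e' → D.NumClass c V → D.length V ≤ D.length Q) :
    ∃ r : Q ⟶ W, eQ ≫ r = eW := by
  haveI := heQ
  haveI := heW
  set c2 : P' ⟶ Q ⊞ W := biprod.lift eQ eW with hc2
  have hfac1 : factorThruImage c2 ≫ (image.ι c2 ≫ biprod.fst) = eQ := by
    rw [← Category.assoc, image.fac, hc2, biprod.lift_fst]
  have hepi1 : Epi (image.ι c2 ≫ biprod.fst) := by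
    have h : Epi (factorThruImage c2 ≫ (image.ι c2 ≫ biprod.fst)) := by
      rw [hfac1]; exact heQ
    exact epi_of_epi (factorThruImage c2) _
  have hVnum : D.NumClass c (image c2) := by
    intro l hl
    have h1 := D.mult_le_of_mono (image.ι c2) l
    have h2 := D.mult_biprod Q W l
    have h3 := hQn l hl
    have h4 := hWn l hl
    omega
  have hVle : D.length (image c2) ≤ D.length Q :=
    hmax _ (factorThruImage c2) inferInstance hVnum
  have hQle : D.length Q ≤ D.length (image c2) :=
    D.length_le_of_epi (image.ι c2 ≫ biprod.fst)
  haveI hiso : IsIso (image.ι c2 ≫ biprod.fst) :=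
    D.isIso_of_epi_of_mult _ (le_antisymm hQle hVle)
  refine ⟨inv (image.ι c2 ≫ biprod.fst) ≫ image.ι c2 ≫ biprod.snd, ?_⟩
  calc eQ ≫ inv (image.ι c2 ≫ biprod.fst) ≫ image.ι c2 ≫ biprod.snd
      = (factorThruImage c2 ≫ (image.ι c2 ≫ biprod.fst)) ≫
          inv (image.ι c2 ≫ biprod.fst) ≫ image.ι c2 ≫ biprod.snd := by rw [hfac1]
  _ = factorThruImage c2 ≫ ((image.ι c2 ≫ biprod.fst) ≫ inv (image.ι c2 ≫ biprod.fst)) ≫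
        image.ι c2 ≫ biprod.snd := by simp only [Category.assoc]
  _ = factorThruImage c2 ≫ image.ι c2 ≫ biprod.snd := by
        rw [IsIso.hom_inv_id, Category.id_comp]
  _ = eW := by rw [← Category.assoc, image.fac, hc2, biprod.lift_snd]

/-- The master chain construction inside `P i`. -/
lemma DeligneData.chain_master (hΔ : ∀ j, D.mult (D.Δ j) j = 1) (i : Fin n) :
    (∀ l, D.mult (D.P i) l ≤ ∑ j, D.mult (D.nabla j) i * D.mult (D.Δ j) l) ∧
    (D.length (D.P i) = ∑ j, D.mult (D.nabla j) i * D.length (D.Δ j) →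
      ∃ (d : ℕ) (F : Fin (d + 1) → C) (f : ∀ l : Fin d, F l.castSucc ⟶ F l.succ),
        IsZero (F 0) ∧ Nonempty (F (Fin.last d) ≅ D.P i) ∧
        ∀ l : Fin d, Mono (f l) ∧ ∃ (N : ℕ) (g : Fin N → Fin n), (∀ a, i ≤ g a) ∧
          Nonempty (cokernel (f l) ≅ ⨁ (fun a : Fin N => D.Δ (g a)))) := by
  -- choose the maximal quotient tower
  obtain ⟨Q, e, hQ⟩ : ∃ (Q : ℕ → C) (e : ∀ c, D.P i ⟶ Q c), ∀ c,
      Epi (e c) ∧ D.NumClass c (Q c) ∧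
      ∀ (W : C) (e' : D.P i ⟶ W), Epi e' → D.NumClass c W →
        D.length W ≤ D.length (Q c) := by
    choose Q e h1 h2 h3 using fun c => D.exists_max_quot (D.P i) c
    exact ⟨Q, e, fun c => ⟨h1 c, h2 c, h3 c⟩⟩
  have hepi : ∀ c, Epi (e c) := fun c => (hQ c).1
  have hnum : ∀ c, D.NumClass c (Q c) := fun c => (hQ c).2.1
  have hmax : ∀ c (W : C) (e' : D.P i ⟶ W), Epi e' → D.NumClass c W →
      D.length W ≤ D.length (Q c) := fun c => (hQ c).2.2
  -- the connecting maps
  obtain ⟨r, hr⟩ : ∃ (r : ∀ c, Q (c + 1) ⟶ Q c), ∀ c, e (c + 1) ≫ r c = e c := by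
    have h : ∀ c, ∃ rc : Q (c + 1) ⟶ Q c, e (c + 1) ≫ rc = e c := by
      intro c
      exact D.max_quot_factor (e (c + 1)) (e c) (hepi _) (hepi _) (hnum _)
        (fun l hl => hnum c l (by omega)) (hmax (c + 1))
    choose r hr using h
    exact ⟨r, hr⟩
  have hrepi : ∀ c, Epi (r c) := by
    intro c
    haveI := hepi c
    haveI := hepi (c + 1)
    have h : Epi (e (c + 1) ≫ r c) := by rw [hr c]; exact hepi c
    exact epi_of_epi (e (c + 1)) (r c)
  -- kernels
  set K : ℕ → C := fun c => kernel (e c) with hK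
  set L : ℕ → C := fun c => kernel (r c) with hL
  have hu0 : ∀ c, kernel.ι (e (c + 1)) ≫ e c = 0 := by
    intro c
    rw [← hr c, ← Category.assoc, kernel.condition, zero_comp]
  set u : ∀ c, K (c + 1) ⟶ K c := fun c => kernel.lift (e c) (kernel.ι (e (c + 1))) (hu0 c)
    with hu
  have huι : ∀ c, u c ≫ kernel.ι (e c) = kernel.ι (e (c + 1)) := fun c => kernel.lift_ι _ _ _
  have humono : ∀ c, Mono (u c) := by
    intro c
    have h : Mono (u c ≫ kernel.ι (e c)) := by rw [huι c]; exact inferInstance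
    exact mono_of_mono (u c) (kernel.ι (e c))
  have hw0 : ∀ c, (kernel.ι (e c) ≫ e (c + 1)) ≫ r c = 0 := by
    intro c
    rw [Category.assoc, hr c, kernel.condition]
  set w : ∀ c, K c ⟶ L c := fun c => kernel.lift (r c) (kernel.ι (e c) ≫ e (c + 1)) (hw0 c)
    with hwdef
  have hwι : ∀ c, w c ≫ kernel.ι (r c) = kernel.ι (e c) ≫ e (c + 1) :=
    fun c => kernel.lift_ι _ _ _
  have huw : ∀ c, u c ≫ w c = 0 := by
    intro c
    rw [← cancel_mono (kernel.ι (r c)), Category.assoc, hwι c, ← Category.assoc, huι c,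
      kernel.condition, zero_comp]
  -- u c is the kernel of w c
  have hfork : ∀ c, IsLimit (KernelFork.ofι (u c) (huw c)) := by
    intro c
    refine KernelFork.IsLimit.ofι (u c) (huw c)
      (fun {W} v hv => kernel.lift (e (c + 1)) (v ≫ kernel.ι (e c)) ?_)
      (fun {W} v hv => ?_) (fun {W} v hv z hz => ?_)
    · rw [Category.assoc, ← hwι c, ← Category.assoc, hv, zero_comp]
    · haveI := humono c
      rw [← cancel_mono (kernel.ι (e c)), Category.assoc, huι c, kernel.lift_ι]
    · haveI := humono c
      rw [← cancel_mono (u c)]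
      rw [hz]
      haveI := humono c
      rw [← cancel_mono (kernel.ι (e c)), Category.assoc, huι c, kernel.lift_ι]
  -- arithmetic of multiplicities
  have hKQ : ∀ c l, D.mult (K c) l + D.mult (Q c) l = D.mult (D.P i) l := by
    intro c l
    haveI := hepi c
    exact D.mult_add_of_epi (e c) l
  have hLQ : ∀ c l, D.mult (L c) l + D.mult (Q c) l = D.mult (Q (c + 1)) l := by
    intro c l
    haveI := hrepi c
    exact D.mult_add_of_epi (r c) l
  have hQ0 : ∀ l, D.mult (Q 0) l = 0 := fun l => hnum 0 l (Nat.zero_le _)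
  have hQbig : ∀ c, n ≤ c → ∀ l, D.mult (Q c) l = D.mult (D.P i) l := by
    intro c hc
    have h1 : D.NumClass c (D.P i) := by
      intro l hl
      exact absurd (lt_of_lt_of_le l.isLt (le_trans hc hl)) (lt_irrefl _)
    have h2 : D.length (D.P i) ≤ D.length (Q c) := hmax c (D.P i) (𝟙 _) inferInstance h1
    haveI := hepi c
    have h3 : ∀ l, D.mult (Q c) l ≤ D.mult (D.P i) l := fun l => D.mult_le_of_epi (e c) l
    have h4 : D.length (Q c) = D.length (D.P i) := by
      have := D.length_le_of_epi (e c)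
      omega
    intro l
    exact (Finset.sum_eq_sum_iff_of_le (fun l _ => h3 l)).1 h4 l (Finset.mem_univ l)
  have hQzero : ∀ c, c ≤ (i : ℕ) → IsZero (Q c) := by
    intro c hc
    by_contra hcon
    obtain ⟨m, π, hπ⟩ := D.exists_epi_to_simple (Q c) hcon
    haveI := hπ
    haveI := hepi c
    have hne : e c ≫ π ≠ 0 := by
      intro h0
      have : Epi (e c ≫ π) := epi_comp _ _
      rw [h0] at this
      exact D.simple_nonzero m (epi_zero_isZero this)
    obtain ⟨h, hiso, -⟩ := D.factor_cover (e c ≫ π) hne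
    have hmi : m = i := D.distinct m i ⟨asIso h⟩
    subst hmi
    have h1 : D.mult (D.S m) m ≤ D.mult (Q c) m := D.mult_le_of_epi π m
    rw [D.mult_simple, hnum c m hc] at h1
    simp at h1
  -- w c is epi
  have hwepi : ∀ c, Epi (w c) := by
    intro c
    have himg : (u c) ≫ factorThruImage (w c) = 0 := by
      rw [← cancel_mono (image.ι (w c)), Category.assoc, image.fac, huw c, zero_comp]
    have hforki : IsLimit (KernelFork.ofι (u c) himg) := by
      refine KernelFork.IsLimit.ofι (u c) himg
        (fun {W} v hv => kernel.lift (e (c + 1)) (v ≫ kernel.ι (e c)) ?_)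
        (fun {W} v hv => ?_) (fun {W} v hv z hz => ?_)
      · have hv' : v ≫ w c = 0 := by
          rw [← image.fac (w c), ← Category.assoc, hv, zero_comp]
        rw [Category.assoc, ← hwι c, ← Category.assoc, hv', zero_comp]
      · haveI := humono c
        rw [← cancel_mono (kernel.ι (e c)), Category.assoc, huι c, kernel.lift_ι]
      · haveI := humono c
        rw [← cancel_mono (u c), hz]
        rw [← cancel_mono (kernel.ι (e c)), Category.assoc, huι c, kernel.lift_ι]
    have hse : (ShortComplex.mk (u c) (factorThruImage (w c)) himg).ShortExact := by
      haveI := humono c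
      exact ShortComplex.ShortExact.mk'
        (ShortComplex.exact_of_f_is_kernel _ hforki) inferInstance inferInstance
    have hmW2 : ∀ l, D.mult (K (c + 1)) l + D.mult (image (w c)) l = D.mult (K c) l :=
      fun l => (D.mult_additive _ hse l).symm
    have hmimg : ∀ l, D.mult (image (w c)) l = D.mult (L c) l := by
      intro l
      have h1 := hKQ c l
      have h2 := hKQ (c + 1) l
      have h3 := hLQ c l
      have h4 := hmW2 l
      omega
    have hlenimg : D.length (image (w c)) = D.length (L c) :=
      Finset.sum_congr rfl fun l _ => hmimg l
    haveI : IsIso (image.ι (w c)) := D.isIso_of_mono_of_mult (image.ι (w c)) hlenimg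
    rw [← image.fac (w c)]
    exact epi_comp _ _
  -- layer hypotheses
  have hLnum : ∀ c (hc : c < n), ∀ l, (⟨c, hc⟩ : Fin n) < l → D.mult (L c) l = 0 := by
    intro c hc l hl
    have h1 : (c + 1 : ℕ) ≤ (l : ℕ) := hl
    have h2 := hnum (c + 1) l h1
    have h3 := hLQ c l
    omega
  have hLquot : ∀ c (hc : c < n), ∀ (W : C) (ρ : L c ⟶ W), Epi ρ →
      (∀ l, (⟨c, hc⟩ : Fin n) ≤ l → D.mult W l = 0) → IsZero W := by
    intro c hc W ρ hρ hW
    haveI := hρ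
    haveI := hwepi c
    have hg : Epi (w c ≫ ρ) := epi_comp _ _
    haveI := hg
    haveI : Mono (kernel.ι (w c ≫ ρ) ≫ kernel.ι (e c)) := mono_comp _ _
    have hmV : ∀ l, D.mult (cokernel (kernel.ι (w c ≫ ρ) ≫ kernel.ι (e c))) l
        = D.mult (Q c) l + D.mult W l := by
      intro l
      have h1 := D.mult_add_of_epi (w c ≫ ρ) l
      have h2 := D.mult_add_of_mono (kernel.ι (w c ≫ ρ) ≫ kernel.ι (e c)) l
      have h3 := hKQ c l
      omega
    have hVnum : D.NumClass c (cokernel (kernel.ι (w c ≫ ρ) ≫ kernel.ι (e c))) := by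
      intro l hl
      have h1 := hnum c l hl
      have h2 := hW l hl
      have h3 := hmV l
      omega
    have hVle := hmax c _ (cokernel.π _) inferInstance hVnum
    have hVlen : D.length (cokernel (kernel.ι (w c ≫ ρ) ≫ kernel.ι (e c)))
        = D.length (Q c) + D.length W := by
      calc D.length (cokernel (kernel.ι (w c ≫ ρ) ≫ kernel.ι (e c)))
          = ∑ l, (D.mult (Q c) l + D.mult W l) := Finset.sum_congr rfl fun l _ => hmV l
      _ = D.length (Q c) + D.length W := Finset.sum_add_distrib
    have : D.length W = 0 := by omega
    exact D.isZero_of_length this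
  -- the Hom bound for layers
  have hLfr : ∀ c (hc : c < n),
      finrank k (L c ⟶ D.S ⟨c, hc⟩) ≤ D.mult (D.nabla ⟨c, hc⟩) i := by
    intro c hc
    set t : Fin n := ⟨c, hc⟩ with ht
    haveI := D.homFinite (L c) (D.S t)
    haveI := D.homFinite (L c) (D.nabla t)
    haveI := D.homFinite (K c) (D.nabla t)
    haveI := D.homFinite (D.P i) (D.nabla t)
    haveI : Mono (D.m t) := (D.costd t).1
    haveI : Mono (D.ι t) := (D.injHull t).2.1
    obtain ⟨r₀, hr₀⟩ := (D.costd t).2.2 (D.ι t) inferInstance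
      (ExtClosure.of _ ⟨t, le_refl t, ⟨Iso.refl _⟩⟩)
    have hr₀mono : Mono r₀ := by
      have h : Mono (r₀ ≫ D.m t) := by rw [hr₀]; exact inferInstance
      exact mono_of_mono r₀ (D.m t)
    have step1 : finrank k (L c ⟶ D.S t) ≤ finrank k (L c ⟶ D.nabla t) := by
      refine LinearMap.finrank_le_finrank_of_injective
        (f := Linear.rightComp k (L c) r₀) ?_
      intro a b hab
      exact (cancel_mono r₀).1 hab
    have step2 : finrank k (L c ⟶ D.nabla t) ≤ finrank k (K c ⟶ D.nabla t) := by
      haveI := hwepi c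
      refine LinearMap.finrank_le_finrank_of_injective
        (f := Linear.leftComp k (D.nabla t) (w c)) ?_
      intro a b hab
      exact (cancel_epi (w c)).1 hab
    have step3 : finrank k (K c ⟶ D.nabla t) ≤ finrank k (D.P i ⟶ D.nabla t) := by
      have hco : ∀ l, t < l → D.mult (cokernel (kernel.ι (e c))) l = 0 := by
        intro l hl
        have h1 : D.mult (K c) l + D.mult (cokernel (kernel.ι (e c))) l
            = D.mult (D.P i) l := D.mult_add_of_mono (kernel.ι (e c)) l
        have h2 := hKQ c l
        have h3 : D.mult (Q c) l = 0 := hnum c l (le_of_lt hl)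
        omega
      have hsurj : Function.Surjective (Linear.leftComp k (D.nabla t) (kernel.ι (e c)) :
          (D.P i ⟶ D.nabla t) →ₗ[k] (K c ⟶ D.nabla t)) := by
        intro f
        obtain ⟨g, hg⟩ := D.hom_ext_lift (kernel.ι (e c)) hco f
        exact ⟨g, hg⟩
      calc finrank k (K c ⟶ D.nabla t)
          = finrank k (⊤ : Submodule k (K c ⟶ D.nabla t)) := (finrank_top k _).symm
      _ = finrank k (LinearMap.range (Linear.leftComp k (D.nabla t) (kernel.ι (e c)) :
            (D.P i ⟶ D.nabla t) →ₗ[k] (K c ⟶ D.nabla t))) := by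
          rw [LinearMap.range_eq_top.2 hsurj]
      _ ≤ finrank k (D.P i ⟶ D.nabla t) := LinearMap.finrank_range_le _
    have step4 : finrank k (D.P i ⟶ D.nabla t) = D.mult (D.nabla t) i :=
      D.fr_eq_mult i (D.costd t).2.1
    omega
  -- telescoping sums
  have hTel : ∀ l (N : ℕ),
      D.mult (Q N) l = ∑ c ∈ Finset.range N, D.mult (L c) l := by
    intro l N
    induction N with
    | zero => simpa using hQ0 l
    | succ N ihN =>
      rw [Finset.sum_range_succ, ← ihN]
      have := hLQ N l
      omega
  have hTelP : ∀ l, D.mult (D.P i) l = ∑ c ∈ Finset.range n, D.mult (L c) l := by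
    intro l
    rw [← hTel l n, hQbig n le_rfl l]
  -- the per-simple bound
  have hbound : ∀ l, D.mult (D.P i) l ≤ ∑ j, D.mult (D.nabla j) i * D.mult (D.Δ j) l := by
    intro l
    rw [hTelP l]
    have hstep : ∀ c ∈ Finset.range n, D.mult (L c) l ≤
        (fun c => if hc : c < n then D.mult (D.nabla ⟨c, hc⟩) i * D.mult (D.Δ ⟨c, hc⟩) l
          else 0) c := by
      intro c hc
      rw [Finset.mem_range] at hc
      show D.mult (L c) l ≤ if hc' : c < n then
        D.mult (D.nabla ⟨c, hc'⟩) i * D.mult (D.Δ ⟨c, hc'⟩) l else 0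
      rw [dif_pos hc]
      calc D.mult (L c) l ≤ finrank k (L c ⟶ D.S ⟨c, hc⟩) * D.mult (D.Δ ⟨c, hc⟩) l :=
            D.layer_bound (D.length (L c)) (L c) le_rfl (hLnum c hc) (hLquot c hc) l
      _ ≤ D.mult (D.nabla ⟨c, hc⟩) i * D.mult (D.Δ ⟨c, hc⟩) l :=
            Nat.mul_le_mul_right _ (hLfr c hc)
    calc ∑ c ∈ Finset.range n, D.mult (L c) l
        ≤ ∑ c ∈ Finset.range n, (fun c => if hc : c < n then
            D.mult (D.nabla ⟨c, hc⟩) i * D.mult (D.Δ ⟨c, hc⟩) l else 0) c :=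
          Finset.sum_le_sum hstep
    _ = ∑ j : Fin n, D.mult (D.nabla j) i * D.mult (D.Δ j) l := by
        rw [← Fin.sum_univ_eq_sum_range]
        refine Finset.sum_congr rfl (fun j _ => ?_)
        rw [dif_pos j.isLt]
  refine ⟨hbound, ?_⟩
  intro hEq
  -- length telescoping
  have hQnlen : D.length (Q n) = D.length (D.P i) :=
    Finset.sum_congr rfl fun l _ => hQbig n le_rfl l
  have hlenTel : D.length (D.P i) = ∑ c ∈ Finset.range n, D.length (L c) := by
    calc D.length (D.P i) = D.length (Q n) := hQnlen.symm
    _ = ∑ l, ∑ c ∈ Finset.range n, D.mult (L c) l :=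
        Finset.sum_congr rfl fun l _ => hTel l n
    _ = ∑ c ∈ Finset.range n, D.length (L c) := Finset.sum_comm
  set A : ℕ → ℕ := fun c => if hc : c < n then
    finrank k (L c ⟶ D.S ⟨c, hc⟩) * D.length (D.Δ ⟨c, hc⟩) else 0 with hA
  set B : ℕ → ℕ := fun c => if hc : c < n then
    D.mult (D.nabla ⟨c, hc⟩) i * D.length (D.Δ ⟨c, hc⟩) else 0 with hB
  have hLA : ∀ c ∈ Finset.range n, D.length (L c) ≤ A c := by
    intro c hc
    rw [Finset.mem_range] at hc
    simp only [hA]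
    rw [dif_pos hc]
    exact D.length_layer_bound (L c) (hLnum c hc) (hLquot c hc)
  have hABle : ∀ c ∈ Finset.range n, A c ≤ B c := by
    intro c hc
    rw [Finset.mem_range] at hc
    simp only [hA, hB]
    rw [dif_pos hc, dif_pos hc]
    exact Nat.mul_le_mul_right _ (hLfr c hc)
  have hSumB : ∑ c ∈ Finset.range n, B c = D.length (D.P i) := by
    rw [hEq]
    rw [← Fin.sum_univ_eq_sum_range]
    refine Finset.sum_congr rfl (fun j _ => ?_)
    simp only [hB]
    rw [dif_pos j.isLt]
  have hSumL : ∑ c ∈ Finset.range n, D.length (L c) = D.length (D.P i) := hlenTel.symm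
  have hSumA : ∑ c ∈ Finset.range n, A c = D.length (D.P i) := by
    have h1 : ∑ c ∈ Finset.range n, D.length (L c) ≤ ∑ c ∈ Finset.range n, A c :=
      Finset.sum_le_sum hLA
    have h2 : ∑ c ∈ Finset.range n, A c ≤ ∑ c ∈ Finset.range n, B c :=
      Finset.sum_le_sum hABle
    omega
  have hLay : ∀ c ∈ Finset.range n, D.length (L c) = A c :=
    (Finset.sum_eq_sum_iff_of_le hLA).1 (by omega)
  have hΔpos : ∀ t : Fin n, 0 < D.length (D.Δ t) := by
    intro t
    have h1 : D.mult (D.Δ t) t ≤ D.length (D.Δ t) :=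
      Finset.single_le_sum (f := fun l => D.mult (D.Δ t) l)
        (fun _ _ => Nat.zero_le _) (Finset.mem_univ t)
    rw [hΔ t] at h1
    omega
  have hLiso : ∀ c (hc : c < n),
      Nonempty (L c ≅ ⨁ (fun _ : Fin (finrank k (L c ⟶ D.S ⟨c, hc⟩)) => D.Δ ⟨c, hc⟩)) := by
    intro c hc
    refine D.layer_iso _ (L c) (hLnum c hc) (hLquot c hc) rfl ?_ (hΔpos _)
    have h := hLay c (Finset.mem_range.2 hc)
    simp only [hA] at h
    rw [dif_pos hc] at h
    exact h
  -- zero kernels at the top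
  have hKzero : ∀ x, n ≤ x → IsZero (K x) := by
    intro x hx
    refine D.isZero_of_length (Finset.sum_eq_zero fun l _ => ?_)
    have h1 := hKQ x l
    have h2 := hQbig x hx l
    omega
  have hsub : ∀ a : Fin n, n - ((a.castSucc : Fin (n + 1)) : ℕ)
      = (n - ((a.succ : Fin (n + 1)) : ℕ)) + 1 := by
    intro a
    have := a.isLt
    simp only [Fin.coe_castSucc, Fin.val_succ]
    omega
  -- the cokernel of each step
  have hcokiso : ∀ c, Nonempty (cokernel (u c) ≅ L c) := by
    intro c
    haveI := hwepi c
    exact ⟨IsColimit.coconePointUniqueUpToIso (cokernelIsCokernel (u c))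
      (Abelian.epiIsCokernelOfKernel _ (hfork c))⟩
  refine ⟨n, fun a => K (n - (a : ℕ)),
    fun a => eqToHom (congrArg K (hsub a)) ≫ u (n - ((a.succ : Fin (n + 1)) : ℕ)),
    ?_, ?_, ?_⟩
  · exact hKzero _ (by simp)
  · show Nonempty (K (n - ((Fin.last n : Fin (n + 1)) : ℕ)) ≅ D.P i)
    have hnn : n - ((Fin.last n : Fin (n + 1)) : ℕ) = 0 := by simp
    rw [hnn]
    haveI := hepi 0
    have hlen0 : D.length (K 0) = D.length (D.P i) := by
      refine Finset.sum_congr rfl fun l _ => ?_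
      have h1 := hKQ 0 l
      have h2 := hQ0 l
      omega
    haveI : IsIso (kernel.ι (e 0)) := D.isIso_of_mono_of_mult (kernel.ι (e 0)) hlen0
    exact ⟨asIso (kernel.ι (e 0))⟩
  · intro a
    set c : ℕ := n - ((a.succ : Fin (n + 1)) : ℕ) with hcdef
    have hcn : c < n := by
      have := a.isLt
      rw [hcdef]
      simp only [Fin.val_succ]
      omega
    constructor
    · haveI := humono c
      have : Mono (eqToHom (congrArg K (hsub a)) ≫ u c) := mono_comp _ _
      exact this
    · obtain ⟨eC⟩ := hcokiso c
      by_cases hci : (i : ℕ) ≤ c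
      · obtain ⟨eL⟩ := hLiso c hcn
        refine ⟨finrank k (L c ⟶ D.S ⟨c, hcn⟩), fun _ => ⟨c, hcn⟩, fun _ => ?_, ?_⟩
        · exact hci
        · exact ⟨(cokernelEpiComp (eqToHom (congrArg K (hsub a))) (u c)).trans
            (eC.trans eL)⟩
      · refine ⟨0, Fin.elim0, fun a0 => a0.elim0, ?_⟩
        have hLz : IsZero (L c) := by
          have h1 : IsZero (Q c) := hQzero c (by omega)
          have h2 : IsZero (Q (c + 1)) := hQzero (c + 1) (by omega)
          refine D.isZero_of_length (Finset.sum_eq_zero fun l _ => ?_)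
          have h3 := hLQ c l
          have h4 := D.mult_isZero h1 l
          have h5 := D.mult_isZero h2 l
          omega
        exact ⟨(cokernelEpiComp (eqToHom (congrArg K (hsub a))) (u c)).trans
          ((eC.trans hLz.isoZero).trans (isZero_biproduct_empty _).isoZero.symm)⟩

end Aux7

/-- **Lemma** (maximal length of projective covers). Suppose `[Δ j : S j] = 1` for all `j`.
Then `length (P i) ≤ ∑_j [∇ j : S i] · length (Δ j)` for every `i`; equality holds for all
`i` if and only if `[P i] = ∑_{j ≥ i} [∇ j : S i] · [Δ j]` in `K(A)` for all `i`; and in the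
case of equality each `P i` admits a filtration whose factors are direct sums of the
standard objects `Δ j`, `j ≥ i`. -/
theorem length_projective_le (D : DeligneData k C n)
    (hΔ : ∀ j, D.mult (D.Δ j) j = 1) :
    (∀ i, D.length (D.P i) ≤ ∑ j, D.mult (D.nabla j) i * D.length (D.Δ j)) ∧
    ((∀ i, D.length (D.P i) = ∑ j, D.mult (D.nabla j) i * D.length (D.Δ j)) ↔
      (∀ i, K0.cls (D.P i) =
        ∑ j ∈ Finset.univ.filter (fun j => i ≤ j),
          (D.mult (D.nabla j) i) • K0.cls (D.Δ j))) ∧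
    ((∀ i, D.length (D.P i) = ∑ j, D.mult (D.nabla j) i * D.length (D.Δ j)) →
      ∀ i, ∃ (d : ℕ) (F : Fin (d + 1) → C) (f : ∀ l : Fin d, F l.castSucc ⟶ F l.succ),
        IsZero (F 0) ∧ Nonempty (F (Fin.last d) ≅ D.P i) ∧
        ∀ l : Fin d, Mono (f l) ∧ ∃ (N : ℕ) (g : Fin N → Fin n), (∀ a, i ≤ g a) ∧
          Nonempty (cokernel (f l) ≅ ⨁ (fun a : Fin N => D.Δ (g a)))) := by
  have hmaster := fun i => D.chain_master hΔ i
  have hexp : ∀ i, (∑ j, D.mult (D.nabla j) i * D.length (D.Δ j))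
      = ∑ l, ∑ j, D.mult (D.nabla j) i * D.mult (D.Δ j) l := by
    intro i
    rw [Finset.sum_comm]
    refine Finset.sum_congr rfl fun j _ => ?_
    rw [DeligneData.length, Finset.mul_sum]
  have hpart1 : ∀ i, D.length (D.P i) ≤ ∑ j, D.mult (D.nabla j) i * D.length (D.Δ j) := by
    intro i
    calc D.length (D.P i) = ∑ l, D.mult (D.P i) l := rfl
    _ ≤ ∑ l, ∑ j, D.mult (D.nabla j) i * D.mult (D.Δ j) l :=
        Finset.sum_le_sum fun l _ => (hmaster i).1 l
    _ = ∑ j, D.mult (D.nabla j) i * D.length (D.Δ j) := (hexp i).symm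
  have htermof : ∀ i, D.length (D.P i) = ∑ j, D.mult (D.nabla j) i * D.length (D.Δ j) →
      ∀ l, D.mult (D.P i) l = ∑ j, D.mult (D.nabla j) i * D.mult (D.Δ j) l := by
    intro i h1
    have hsum : ∑ l, D.mult (D.P i) l
        = ∑ l, ∑ j, D.mult (D.nabla j) i * D.mult (D.Δ j) l := by
      calc ∑ l, D.mult (D.P i) l = D.length (D.P i) := rfl
      _ = ∑ j, D.mult (D.nabla j) i * D.length (D.Δ j) := h1
      _ = ∑ l, ∑ j, D.mult (D.nabla j) i * D.mult (D.Δ j) l := hexp i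
    intro l
    exact (Finset.sum_eq_sum_iff_of_le (fun l _ => (hmaster i).1 l)).1 hsum l
      (Finset.mem_univ l)
  refine ⟨hpart1, ⟨?_, ?_⟩, ?_⟩
  · intro hEqAll i
    have hterm := htermof i (hEqAll i)
    calc K0.cls (D.P i) = ∑ l, (D.mult (D.P i) l) • K0.cls (D.S l) := D.cls_eq_sum _
    _ = ∑ l, (∑ j, D.mult (D.nabla j) i * D.mult (D.Δ j) l) • K0.cls (D.S l) :=
        Finset.sum_congr rfl fun l _ => by rw [hterm l]
    _ = ∑ l, ∑ j, (D.mult (D.nabla j) i * D.mult (D.Δ j) l) • K0.cls (D.S l) :=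
        Finset.sum_congr rfl fun l _ => Finset.sum_smul
    _ = ∑ j, ∑ l, (D.mult (D.nabla j) i * D.mult (D.Δ j) l) • K0.cls (D.S l) :=
        Finset.sum_comm
    _ = ∑ j, (D.mult (D.nabla j) i) • K0.cls (D.Δ j) := by
        refine Finset.sum_congr rfl fun j _ => ?_
        rw [D.cls_eq_sum (D.Δ j), Finset.smul_sum]
        refine Finset.sum_congr rfl fun l _ => ?_
        rw [mul_smul]
    _ = ∑ j ∈ Finset.univ.filter (fun j => i ≤ j),
          (D.mult (D.nabla j) i) • K0.cls (D.Δ j) := by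
        symm
        refine Finset.sum_subset (Finset.filter_subset _ _) ?_
        intro j _ hj
        rw [Finset.mem_filter] at hj
        have hji : j < i := by
          have : ¬ i ≤ j := fun h => hj ⟨Finset.mem_univ j, h⟩
          exact lt_of_not_ge this
        rw [D.mult_nabla_eq_zero hji, zero_smul]
  · intro hK0 i
    have hterm : ∀ l, D.mult (D.P i) l = ∑ j, D.mult (D.nabla j) i * D.mult (D.Δ j) l := by
      intro l
      have h1 := congrArg (D.multHom l) (hK0 i)
      rw [D.multHom_cls, map_sum] at h1
      have h2 : ∀ j ∈ Finset.univ.filter (fun j => i ≤ j),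
          D.multHom l ((D.mult (D.nabla j) i) • K0.cls (D.Δ j))
          = (D.mult (D.nabla j) i : ℤ) * (D.mult (D.Δ j) l : ℤ) := by
        intro j _
        rw [map_nsmul, D.multHom_cls, nsmul_eq_mul]
      rw [Finset.sum_congr rfl h2] at h1
      have h3 : (∑ j ∈ Finset.univ.filter (fun j => i ≤ j),
          (D.mult (D.nabla j) i : ℤ) * (D.mult (D.Δ j) l : ℤ))
          = ∑ j, (D.mult (D.nabla j) i : ℤ) * (D.mult (D.Δ j) l : ℤ) := by
        refine Finset.sum_subset (Finset.filter_subset _ _) ?_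
        intro j _ hj
        rw [Finset.mem_filter] at hj
        have hji : j < i := by
          have : ¬ i ≤ j := fun h => hj ⟨Finset.mem_univ j, h⟩
          exact lt_of_not_ge this
        rw [D.mult_nabla_eq_zero hji]
        simp
      rw [h3] at h1
      exact_mod_cast h1
    calc D.length (D.P i) = ∑ l, D.mult (D.P i) l := rfl
    _ = ∑ l, ∑ j, D.mult (D.nabla j) i * D.mult (D.Δ j) l :=
        Finset.sum_congr rfl fun l _ => hterm l
    _ = ∑ j, D.mult (D.nabla j) i * D.length (D.Δ j) := (hexp i).symm
  · intro hEqAll i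
    exact (hmaster i).2 (hEqAll i)

end HWPaper
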